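/- Let n ≥ 1 be an integer and let β > 0, ℓ > 0, d, ε' ≥ 0 and ε'' be real numbers. Let m_1 ≥ m_2 ≥ … ≥ m_n ≥ 1 be real numbers, and let A_0 = 0, A_1, …, A_n and d'_0 = 0, d'_1, …, d'_n be real numbers such that for every a ∈ {1,…,n}: A_a - A_{a-1} ≥ m_a·( ℓ·(1-ε'') + (d'_a - d'_{a-1})/β ) and d'_a + a·d·ℓ + ε'·ℓ ≥ 0. Then A_n ≥ (Σ_{a=1}^n m_a)·ℓ·( 1 - ε'' - (d+ε')/β ) + (d'_n + n·d·ℓ)/β. -/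

import Mathlib

/-- **The Abel-summation inequality at the core of the apparent-length
estimate for random quotients of hyperbolic groups** (section 4.2 of the
paper). Let `n ≥ 1`, `β > 0`, `ℓ > 0`, `d, ε' ≥ 0`, `ε''` real, let
`mm 1 ≥ … ≥ mm n ≥ 1`, `A 0 = 0`, `d' 0 = 0`, and suppose that for all
`1 ≤ a ≤ n` one has `A a - A (a-1) ≥ mm a·(ℓ(1-ε'') + (d' a - d' (a-1))/β)`
and `d' a + adℓ + ε'ℓ ≥ 0`. Then
`A n ≥ (Σ mm a)·ℓ·(1 - ε'' - (d+ε')/β) + (d' n + ndℓ)/β`. -/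
theorem apparent_length_abel_inequality
    (n : ℕ) (hn : 1 ≤ n) (β ℓ d ε' ε'' : ℝ)
    (hβ : 0 < β) (hℓ : 0 < ℓ) (hd : 0 ≤ d) (hε' : 0 ≤ ε')
    (mm A d' : ℕ → ℝ)
    (hmono : ∀ a, 1 ≤ a → a < n → mm (a + 1) ≤ mm a)
    (hmn : 1 ≤ mm n)
    (hA0 : A 0 = 0) (hd'0 : d' 0 = 0)
    (hstep : ∀ a, 1 ≤ a → a ≤ n →
      mm a * (ℓ * (1 - ε'') + (d' a - d' (a - 1)) / β) ≤ A a - A (a - 1))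
    (hprob : ∀ a, 1 ≤ a → a ≤ n → 0 ≤ d' a + a * d * ℓ + ε' * ℓ) :
    (∑ a ∈ Finset.Icc 1 n, mm a) * ℓ * (1 - ε'' - (d + ε') / β) +
        (d' n + n * d * ℓ) / β ≤ A n := by
  -- mm is ≥ 1 on [1, n]
  have hge : ∀ a, 1 ≤ a → a ≤ n → mm n ≤ mm a := by
    intro a ha han
    have key : ∀ k, a + k ≤ n → mm (a + k) ≤ mm a := by
      intro k
      induction k with
      | zero => intro _; simp
      | succ k ih =>
        intro hk
        have h1 : a + k ≤ n := by omega
        have h2 : a + k < n := by omega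
        have := hmono (a + k) (by omega) h2
        calc mm (a + (k + 1)) = mm ((a + k) + 1) := by ring_nf
        _ ≤ mm (a + k) := this
        _ ≤ mm a := ih h1
    have := key (n - a) (by omega)
    rwa [Nat.add_sub_cancel' han] at this
  have hpos : ∀ a, 1 ≤ a → a ≤ n → (1 : ℝ) ≤ mm a := fun a ha han =>
    le_trans hmn (hge a ha han)
  -- Abel-summation induction for the d' part
  have abel : ∀ k, 1 ≤ k → k ≤ n →
      mm k * (d' k + k * d * ℓ + ε' * ℓ) -
        (∑ i ∈ Finset.range k, mm (i + 1)) * (ℓ * (d + ε')) ≤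
      ∑ i ∈ Finset.range k, mm (i + 1) * (d' (i + 1) - d' i) := by
    intro k hk
    induction k, hk using Nat.le_induction with
    | base =>
      intro _
      simp [Finset.sum_range_one, hd'0]
      nlinarith [hℓ.le]
    | succ k hk ih =>
      intro hkn
      have ihk := ih (by omega)
      rw [Finset.sum_range_succ, Finset.sum_range_succ]
      have h1 : (1 : ℝ) ≤ mm (k + 1) := hpos (k + 1) (by omega) hkn
      have h2 : mm (k + 1) ≤ mm k := hmono k hk (by omega)
      have h3 : 0 ≤ d' k + k * d * ℓ + ε' * ℓ := hprob k hk (by omega)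
      have h4 : mm (k + 1) * (d' k + k * d * ℓ + ε' * ℓ) ≤
          mm k * (d' k + k * d * ℓ + ε' * ℓ) :=
        mul_le_mul_of_nonneg_right h2 h3
      have hcast : ((k : ℝ) + 1) = ((k + 1 : ℕ) : ℝ) := by push_cast; ring
      have hε'ℓ : 0 ≤ ε' * ℓ := mul_nonneg hε' hℓ.le
      have hkdl : 0 ≤ (k : ℝ) * d * ℓ := by positivity
      push_cast
      nlinarith [mul_le_mul_of_nonneg_left hε'ℓ (le_trans zero_le_one h1)]
  -- telescoping sum of the step inequality
  have htel : ∑ i ∈ Finset.range n, (A (i + 1) - A i) = A n - A 0 :=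
    Finset.sum_range_sub A n
  have hsum : ∑ i ∈ Finset.range n,
      mm (i + 1) * (ℓ * (1 - ε'') + (d' (i + 1) - d' i) / β) ≤ A n := by
    calc ∑ i ∈ Finset.range n,
        mm (i + 1) * (ℓ * (1 - ε'') + (d' (i + 1) - d' i) / β)
        ≤ ∑ i ∈ Finset.range n, (A (i + 1) - A i) := by
          apply Finset.sum_le_sum
          intro i hi
          have hi' : i < n := Finset.mem_range.mp hi
          have := hstep (i + 1) (by omega) (by omega)
          simpa using this
      _ = A n - A 0 := htel
      _ = A n := by rw [hA0]; ring
  -- identify the Icc sum with the range sum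
  have hIcc : ∑ a ∈ Finset.Icc 1 n, mm a = ∑ i ∈ Finset.range n, mm (i + 1) := by
    rw [← Finset.Ico_add_one_right_eq_Icc, Finset.sum_Ico_eq_sum_range]
    simp [add_comm]
  set Sm := ∑ i ∈ Finset.range n, mm (i + 1) with hSm
  set SD := ∑ i ∈ Finset.range n, mm (i + 1) * (d' (i + 1) - d' i) with hSD
  have hsplit : ∑ i ∈ Finset.range n,
      mm (i + 1) * (ℓ * (1 - ε'') + (d' (i + 1) - d' i) / β)
      = Sm * (ℓ * (1 - ε'')) + SD / β := by
    rw [hSm, hSD, Finset.sum_mul, Finset.sum_div, ← Finset.sum_add_distrib]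
    apply Finset.sum_congr rfl
    intro i _
    field_simp
  have habel := abel n hn le_rfl
  have hmmn : mm n * (d' n + n * d * ℓ + ε' * ℓ) ≥ d' n + n * d * ℓ + ε' * ℓ :=
    le_mul_of_one_le_left (hprob n hn le_rfl) hmn
  have hSDlb : d' n + n * d * ℓ - Sm * (ℓ * (d + ε')) ≤ SD := by
    have : d' n + n * d * ℓ ≤ mm n * (d' n + n * d * ℓ + ε' * ℓ) := by
      nlinarith [mul_nonneg hε' hℓ.le]
    linarith
  rw [hIcc]
  rw [hsplit] at hsum
  have hfinal : Sm * ℓ * (1 - ε'' - (d + ε') / β) + (d' n + n * d * ℓ) / β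
      ≤ Sm * (ℓ * (1 - ε'')) + SD / β := by
    have hβ' : (β : ℝ) ≠ 0 := ne_of_gt hβ
    have hdiv : (d' n + n * d * ℓ - Sm * (ℓ * (d + ε'))) / β ≤ SD / β := by
      gcongr
    have heq : Sm * ℓ * (1 - ε'' - (d + ε') / β) + (d' n + n * d * ℓ) / β
        = Sm * (ℓ * (1 - ε'')) + (d' n + n * d * ℓ - Sm * (ℓ * (d + ε'))) / β := by
      field_simp
      ring
    rw [heq]
    linarith
  linarith
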